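/- Let X, Y ⊆ ℝ² be finite sets in general position and F : X → Y a bijection such that either sign(F x₁, F x₂, F x₃) = sign(x₁, x₂, x₃) for all distinct x₁, x₂, x₃ ∈ X, or sign(F x₁, F x₂, F x₃) = −sign(x₁, x₂, x₃) for all distinct x₁, x₂, x₃ ∈ X. Then F is an isomorphism of the induced convex geometries: for every S ⊆ X, F '' (convexHull ℝ S ∩ X) = convexHull ℝ (F '' S) ∩ Y. -/

import Mathlib

open Set

/-- Orientation sign of a triple of points in the plane: the sign of the determinant of
the matrix with columns `y - x` and `z - x`. -/
noncomputable def osign (x y z : Fin 2 → ℝ) : ℝ :=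
  Real.sign ((y 0 - x 0) * (z 1 - x 1) - (y 1 - x 1) * (z 0 - x 0))

/-- A planar point set is in general position if no three distinct points are collinear. -/
def GenPos (X : Set (Fin 2 → ℝ)) : Prop :=
  ∀ x ∈ X, ∀ y ∈ X, ∀ z ∈ X, x ≠ y → y ≠ z → x ≠ z →
    ¬ Collinear ℝ ({x, y, z} : Set (Fin 2 → ℝ))

/-- A convex geometry on a finite set `J`: a closure operator satisfying the
anti-exchange axiom. -/
structure ConvexGeometry (J : Type) [Fintype J] where
  cl : Set J → Set J
  extensive : ∀ A : Set J, A ⊆ cl A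
  mono : ∀ A B : Set J, A ⊆ B → cl A ⊆ cl B
  idem : ∀ A : Set J, cl (cl A) = cl A
  antiExchange : ∀ A : Set J, cl A = A → ∀ x y : J, x ≠ y → x ∉ A → y ∉ A →
    x ∈ cl (A ∪ {y}) → y ∉ cl (A ∪ {x})

variable {J : Type} [Fintype J]

/-- A set is dependent if some element lies in the closure of the rest. -/
def ConvexGeometry.Dependent (G : ConvexGeometry J) (D : Set J) : Prop :=
  ∃ x ∈ D, x ∈ G.cl (D \ {x})

/-- A circuit is an inclusion-minimal dependent set. -/
def ConvexGeometry.IsCircuit (G : ConvexGeometry J) (C : Set J) : Prop :=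
  G.Dependent C ∧ ∀ D ⊆ C, G.Dependent D → D = C

/-- A convex 4-geometry: all circuits have exactly 4 elements. -/
def ConvexGeometry.Is4Geometry (G : ConvexGeometry J) : Prop :=
  ∀ C : Set J, G.IsCircuit C → C.ncard = 4

/-- `(T, a)` is a rooted triangle of `G` if `T ∪ {a}` is a circuit with root `a`. -/
def ConvexGeometry.RT (G : ConvexGeometry J) (T : Set J) (a : J) : Prop :=
  a ∉ T ∧ G.IsCircuit (insert a T) ∧ a ∈ G.cl T

/-- A realization of a convex geometry in the plane. -/
def IsRealization (G : ConvexGeometry J) (f : J → (Fin 2 → ℝ)) : Prop :=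
  Function.Injective f ∧ GenPos (Set.range f) ∧
    ∀ Y : Set J, f '' (G.cl Y) = convexHull ℝ (f '' Y) ∩ Set.range f

/-- `G.rest n` is the set `Jₙ` remaining after removing the first `n` layers. -/
def ConvexGeometry.rest (G : ConvexGeometry J) : ℕ → Set J
  | 0 => Set.univ
  | n + 1 => {x ∈ G.rest n | x ∈ G.cl (G.rest n \ {x})}

/-- The `n`-th layer: the extreme points of the restricted geometry on `G.rest n`. -/
def ConvexGeometry.layer (G : ConvexGeometry J) (n : ℕ) : Set J :=
  {x ∈ G.rest n | x ∉ G.cl (G.rest n \ {x})}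

def det3 (x y z : Fin 2 → ℝ) : ℝ :=
  (y 0 - x 0) * (z 1 - x 1) - (y 1 - x 1) * (z 0 - x 0)

lemma osign_eq (x y z : Fin 2 → ℝ) : osign x y z = Real.sign (det3 x y z) := rfl

lemma collinear_of_det3 {x y z : Fin 2 → ℝ} (h : det3 x y z = 0) :
    Collinear ℝ ({x, y, z} : Set (Fin 2 → ℝ)) := by
  by_cases hxy : x = y
  · subst hxy
    have : ({x, x, z} : Set (Fin 2 → ℝ)) = {x, z} := by simp
    rw [this]; exact collinear_pair ℝ x z
  · apply (collinear_iff_of_mem (Set.mem_insert x {y, z})).2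
    refine ⟨y - x, ?_⟩
    rintro p (rfl | rfl | hp)
    · exact ⟨0, by simp⟩
    · exact ⟨1, by simp⟩
    · rw [Set.mem_singleton_iff] at hp
      subst hp
      unfold det3 at h
      by_cases h0 : y 0 - x 0 ≠ 0
      · refine ⟨(p 0 - x 0) / (y 0 - x 0), ?_⟩
        funext j
        fin_cases j <;> simp [Pi.smul_apply, smul_eq_mul]
        · field_simp; ring
        · field_simp; nlinarith [h]
      · push_neg at h0
        have h1 : y 1 - x 1 ≠ 0 := by
          intro h1
          apply hxy; funext j; fin_cases j <;> simp <;> linarith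
        refine ⟨(p 1 - x 1) / (y 1 - x 1), ?_⟩
        funext j
        fin_cases j <;> simp [Pi.smul_apply, smul_eq_mul]
        · field_simp; nlinarith [h]
        · field_simp; ring

lemma det3_ne {X : Set (Fin 2 → ℝ)} (hX : GenPos X) {a b c : Fin 2 → ℝ}
    (ha : a ∈ X) (hb : b ∈ X) (hc : c ∈ X) (hab : a ≠ b) (hbc : b ≠ c) (hac : a ≠ c) :
    det3 a b c ≠ 0 :=
  fun h => hX a ha b hb c hc hab hbc hac (collinear_of_det3 h)

lemma det3_affine {a b c p : Fin 2 → ℝ} {α β : ℝ}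
    (hp : p = α • a + β • b + (1 - α - β) • c) :
    det3 b c p = α * det3 a b c ∧ det3 c a p = β * det3 a b c ∧
      det3 a b p = (1 - α - β) * det3 a b c := by
  subst hp
  refine ⟨?_, ?_, ?_⟩ <;>
    simp only [det3, Pi.add_apply, Pi.smul_apply, smul_eq_mul] <;> ring

lemma det3_cramer {a b c : Fin 2 → ℝ} (hD : det3 a b c ≠ 0) (p : Fin 2 → ℝ) :
    p = (det3 b c p / det3 a b c) • a + (det3 c a p / det3 a b c) • b +
      (det3 a b p / det3 a b c) • c := by
  funext i
  fin_cases i <;>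
    simp only [det3, Pi.add_apply, Pi.smul_apply, smul_eq_mul, Fin.zero_eta, Fin.mk_one] <;>
    (unfold det3 at hD; field_simp; ring)

lemma det3_sum (a b c p : Fin 2 → ℝ) :
    det3 b c p + det3 c a p + det3 a b p = det3 a b c := by
  simp only [det3]; ring

lemma combo_mem {a b c : Fin 2 → ℝ} {α β γ : ℝ} (h0a : 0 ≤ α) (h0b : 0 ≤ β)
    (h0c : 0 ≤ γ) (hsum : α + β + γ = 1) :
    α • a + β • b + γ • c ∈ convexHull ℝ ({a, b, c} : Set (Fin 2 → ℝ)) := by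
  have := Finset.centerMass_mem_convexHull (t := (Finset.univ : Finset (Fin 3)))
    (w := ![α, β, γ]) (z := ![a, b, c]) (s := ({a, b, c} : Set (Fin 2 → ℝ)))
    (by intro i _; fin_cases i <;> simpa)
    (by simp [Fin.sum_univ_three, hsum])
    (by intro i _; fin_cases i <;> simp)
  rw [Finset.centerMass, Fin.sum_univ_three, Fin.sum_univ_three] at this
  simp only [Matrix.cons_val_zero, Matrix.cons_val_one, Matrix.head_cons,
    Matrix.cons_val_two, Matrix.tail_cons, hsum, inv_one, one_smul] at this
  exact this

lemma mem_tri_forward {a b c p : Fin 2 → ℝ} (hD : det3 a b c ≠ 0)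
    (hp : p ∈ convexHull ℝ ({a, b, c} : Set (Fin 2 → ℝ))) :
    0 ≤ det3 b c p * det3 a b c ∧ 0 ≤ det3 c a p * det3 a b c ∧
      0 ≤ det3 a b p * det3 a b c := by
  classical
  have hab : a ≠ b := by rintro rfl; exact hD (by unfold det3; ring)
  have hac : a ≠ c := by rintro rfl; exact hD (by unfold det3; ring)
  have hbc : b ≠ c := by rintro rfl; exact hD (by unfold det3; ring)
  have hset : (({a, b, c} : Finset (Fin 2 → ℝ)) : Set (Fin 2 → ℝ)) = {a, b, c} := by simp
  rw [← hset] at hp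
  obtain ⟨w, hw0, hw1, hwp⟩ := Finset.mem_convexHull'.1 hp
  have hna : a ∉ ({b, c} : Finset (Fin 2 → ℝ)) := by simp [hab, hac]
  have hnb : b ∉ ({c} : Finset (Fin 2 → ℝ)) := by simp [hbc]
  rw [Finset.sum_insert hna, Finset.sum_insert hnb, Finset.sum_singleton] at hw1 hwp
  have hwa : 0 ≤ w a := hw0 a (by simp)
  have hwb : 0 ≤ w b := hw0 b (by simp)
  have hwc : 0 ≤ w c := hw0 c (by simp)
  have hp' : p = w a • a + w b • b + (1 - w a - w b) • c := by
    rw [show (1 : ℝ) - w a - w b = w c by linarith, add_assoc]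
    exact hwp.symm
  obtain ⟨h1, h2, h3⟩ := det3_affine hp'
  refine ⟨?_, ?_, ?_⟩
  · rw [h1]; nlinarith [mul_self_nonneg (det3 a b c)]
  · rw [h2]; nlinarith [mul_self_nonneg (det3 a b c)]
  · rw [h3]; nlinarith [mul_self_nonneg (det3 a b c), hwa, hwb, hw1]

lemma signE {s t s' t' : ℝ} (hs : s ≠ 0) (ht : t ≠ 0) (hs' : s' ≠ 0) (ht' : t' ≠ 0)
    (h : Real.sign s' * Real.sign t' = Real.sign s * Real.sign t)
    (hst : 0 ≤ s * t) : 0 ≤ s' * t' := by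
  rcases hs.lt_or_gt with h1 | h1 <;> rcases ht.lt_or_gt with h2 | h2 <;>
    rcases hs'.lt_or_gt with h3 | h3 <;> rcases ht'.lt_or_gt with h4 | h4 <;>
    rw [show Real.sign s = _ from (by first | exact Real.sign_of_neg h1 | exact Real.sign_of_pos h1),
      show Real.sign t = _ from (by first | exact Real.sign_of_neg h2 | exact Real.sign_of_pos h2),
      show Real.sign s' = _ from (by first | exact Real.sign_of_neg h3 | exact Real.sign_of_pos h3),
      show Real.sign t' = _ from (by first | exact Real.sign_of_neg h4 | exact Real.sign_of_pos h4)] at h <;>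
    nlinarith

lemma key {X Y : Set (Fin 2 → ℝ)} (hX : GenPos X) (hY : GenPos Y)
    {F : (Fin 2 → ℝ) → (Fin 2 → ℝ)} (hF : Set.BijOn F X Y) {ε : ℝ}
    (hε : ε = 1 ∨ ε = -1)
    (hs : ∀ x₁ ∈ X, ∀ x₂ ∈ X, ∀ x₃ ∈ X, x₁ ≠ x₂ → x₂ ≠ x₃ → x₁ ≠ x₃ →
      Real.sign (det3 (F x₁) (F x₂) (F x₃)) = ε * Real.sign (det3 x₁ x₂ x₃))
    {S : Set (Fin 2 → ℝ)} (hS : S ⊆ X) :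
    F '' (convexHull ℝ S ∩ X) ⊆ convexHull ℝ (F '' S) ∩ Y := by
  rintro _ ⟨p, ⟨hpc, hpX⟩, rfl⟩
  refine ⟨?_, hF.mapsTo hpX⟩
  by_cases hpS : p ∈ S
  · exact subset_convexHull ℝ _ ⟨p, hpS, rfl⟩
  rw [convexHull_eq_union] at hpc
  simp only [Set.mem_iUnion, exists_prop] at hpc
  obtain ⟨t, htS, hta, htp⟩ := hpc
  have hcard : t.card ≤ 3 := by
    have h1 := hta.card_le_finrank_succ
    rw [Fintype.card_coe] at h1
    have h2 : Module.finrank ℝ (vectorSpan ℝ (Set.range ((↑) : t → (Fin 2 → ℝ)))) ≤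
        Module.finrank ℝ (Fin 2 → ℝ) := Submodule.finrank_le _
    rw [Module.finrank_fin_fun] at h2
    omega
  have hcases : t.card = 0 ∨ t.card = 1 ∨ t.card = 2 ∨ t.card = 3 := by omega
  rcases hcases with h0 | h1 | h2 | h3
  · rw [Finset.card_eq_zero] at h0; subst h0; simp at htp
  · obtain ⟨a, rfl⟩ := Finset.card_eq_one.1 h1
    simp only [Finset.coe_singleton, convexHull_singleton, Set.mem_singleton_iff] at htp
    subst htp
    exact absurd (htS (by simp)) hpS
  · obtain ⟨a, b, hab, rfl⟩ := Finset.card_eq_two.1 h2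
    have haS : a ∈ S := htS (by simp)
    have hbS : b ∈ S := htS (by simp)
    have hpa : p ≠ a := fun h => hpS (h ▸ haS)
    have hpb : p ≠ b := fun h => hpS (h ▸ hbS)
    rw [show ((({a, b} : Finset (Fin 2 → ℝ))) : Set (Fin 2 → ℝ)) = {a, b} by simp,
      convexHull_pair] at htp
    obtain ⟨u, v, hu, hv, huv, hp⟩ := htp
    have hp' : p = u • a + v • b + (1 - u - v) • a := by
      rw [show (1 : ℝ) - u - v = 0 by linarith]
      simp [hp.symm]
    have h0 : det3 a b p = 0 := by
      have := (det3_affine hp').2.2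
      rw [show (1 : ℝ) - u - v = 0 by linarith] at this
      simpa using this
    exact absurd (collinear_of_det3 h0)
      (hX a (hS haS) b (hS hbS) p hpX hab hpb.symm hpa.symm)
  · obtain ⟨a, b, c, hab, hac, hbc, rfl⟩ := Finset.card_eq_three.1 h3
    have haS : a ∈ S := htS (by simp)
    have hbS : b ∈ S := htS (by simp)
    have hcS : c ∈ S := htS (by simp)
    have haX := hS haS; have hbX := hS hbS; have hcX := hS hcS
    have hpa : p ≠ a := fun h => hpS (h ▸ haS)
    have hpb : p ≠ b := fun h => hpS (h ▸ hbS)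
    have hpc : p ≠ c := fun h => hpS (h ▸ hcS)
    rw [show ((({a, b, c} : Finset (Fin 2 → ℝ))) : Set (Fin 2 → ℝ)) = {a, b, c} by simp] at htp
    have hD : det3 a b c ≠ 0 := det3_ne hX haX hbX hcX hab hbc hac
    obtain ⟨q1, q2, q3⟩ := mem_tri_forward hD htp
    have hd1 : det3 b c p ≠ 0 := det3_ne hX hbX hcX hpX hbc hpc.symm hpb.symm
    have hd2 : det3 c a p ≠ 0 := det3_ne hX hcX haX hpX (Ne.symm hac) hpa.symm hpc.symm
    have hd3 : det3 a b p ≠ 0 := det3_ne hX haX hbX hpX hab hpb.symm hpa.symm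
    -- images
    have hFab : F a ≠ F b := fun h => hab (hF.injOn haX hbX h)
    have hFac : F a ≠ F c := fun h => hac (hF.injOn haX hcX h)
    have hFbc : F b ≠ F c := fun h => hbc (hF.injOn hbX hcX h)
    have hFpa : F p ≠ F a := fun h => hpa (hF.injOn hpX haX h)
    have hFpb : F p ≠ F b := fun h => hpb (hF.injOn hpX hbX h)
    have hFpc : F p ≠ F c := fun h => hpc (hF.injOn hpX hcX h)
    have hD' : det3 (F a) (F b) (F c) ≠ 0 :=
      det3_ne hY (hF.mapsTo haX) (hF.mapsTo hbX) (hF.mapsTo hcX) hFab hFbc hFac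
    have hd1' : det3 (F b) (F c) (F p) ≠ 0 :=
      det3_ne hY (hF.mapsTo hbX) (hF.mapsTo hcX) (hF.mapsTo hpX) hFbc hFpc.symm hFpb.symm
    have hd2' : det3 (F c) (F a) (F p) ≠ 0 :=
      det3_ne hY (hF.mapsTo hcX) (hF.mapsTo haX) (hF.mapsTo hpX) (Ne.symm hFac) hFpa.symm hFpc.symm
    have hd3' : det3 (F a) (F b) (F p) ≠ 0 :=
      det3_ne hY (hF.mapsTo haX) (hF.mapsTo hbX) (hF.mapsTo hpX) hFab hFpb.symm hFpa.symm
    have hε2 : ε * ε = 1 := by rcases hε with rfl | rfl <;> norm_num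
    have hsD := hs a haX b hbX c hcX hab hbc hac
    have hs1 := hs b hbX c hcX p hpX hbc hpc.symm hpb.symm
    have hs2 := hs c hcX a haX p hpX (Ne.symm hac) hpa.symm hpc.symm
    have hs3 := hs a haX b hbX p hpX hab hpb.symm hpa.symm
    have trans : ∀ s' s : ℝ, Real.sign s' = ε * Real.sign s → s ≠ 0 → s' ≠ 0 →
        0 ≤ s * det3 a b c → 0 ≤ s' * det3 (F a) (F b) (F c) := by
      intro s' s hsgn hsne hs'ne hge
      refine signE hsne hD hs'ne hD' ?_ hge
      rw [hsgn, hsD]; rcases hε with rfl | rfl <;> ring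
    have q1' := trans _ _ hs1 hd1 hd1' q1
    have q2' := trans _ _ hs2 hd2 hd2' q2
    have q3' := trans _ _ hs3 hd3 hd3' q3
    set D' := det3 (F a) (F b) (F c) with hD'def
    have hα : 0 ≤ det3 (F b) (F c) (F p) / D' := by
      rw [show det3 (F b) (F c) (F p) / D' = (det3 (F b) (F c) (F p) * D') / (D' * D') by
        field_simp]
      exact div_nonneg q1' (mul_self_nonneg D')
    have hβ : 0 ≤ det3 (F c) (F a) (F p) / D' := by
      rw [show det3 (F c) (F a) (F p) / D' = (det3 (F c) (F a) (F p) * D') / (D' * D') by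
        field_simp]
      exact div_nonneg q2' (mul_self_nonneg D')
    have hγ : 0 ≤ det3 (F a) (F b) (F p) / D' := by
      rw [show det3 (F a) (F b) (F p) / D' = (det3 (F a) (F b) (F p) * D') / (D' * D') by
        field_simp]
      exact div_nonneg q3' (mul_self_nonneg D')
    have hsum : det3 (F b) (F c) (F p) / D' + det3 (F c) (F a) (F p) / D' +
        det3 (F a) (F b) (F p) / D' = 1 := by
      rw [← add_div, ← add_div, det3_sum, div_self hD']
    have hmem := combo_mem (a := F a) (b := F b) (c := F c) hα hβ hγ hsum
    rw [← det3_cramer hD' (F p)] at hmem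
    refine convexHull_mono ?_ hmem
    rintro q (rfl | rfl | rfl)
    · exact ⟨a, haS, rfl⟩
    · exact ⟨b, hbS, rfl⟩
    · exact ⟨c, hcS, rfl⟩

/-- A bijection between finite planar sets in general position that
preserves, or reverses, the orientation of all triples is an isomorphism of the induced
convex geometries. -/
theorem weakly_equivalent_implies_isomorphic (X Y : Set (Fin 2 → ℝ))
    (hXfin : X.Finite) (hYfin : Y.Finite) (hX : GenPos X) (hY : GenPos Y)
    (F : (Fin 2 → ℝ) → (Fin 2 → ℝ)) (hF : Set.BijOn F X Y)
    (hsign :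
      (∀ x₁ ∈ X, ∀ x₂ ∈ X, ∀ x₃ ∈ X, x₁ ≠ x₂ → x₂ ≠ x₃ → x₁ ≠ x₃ →
        osign (F x₁) (F x₂) (F x₃) = osign x₁ x₂ x₃) ∨
      (∀ x₁ ∈ X, ∀ x₂ ∈ X, ∀ x₃ ∈ X, x₁ ≠ x₂ → x₂ ≠ x₃ → x₁ ≠ x₃ →
        osign (F x₁) (F x₂) (F x₃) = - osign x₁ x₂ x₃)) :
    ∀ S : Set (Fin 2 → ℝ), S ⊆ X →
      F '' (convexHull ℝ S ∩ X) = convexHull ℝ (F '' S) ∩ Y := by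
  -- extract a uniform sign ε
  obtain ⟨ε, hε, hs⟩ : ∃ ε : ℝ, (ε = 1 ∨ ε = -1) ∧
      ∀ x₁ ∈ X, ∀ x₂ ∈ X, ∀ x₃ ∈ X, x₁ ≠ x₂ → x₂ ≠ x₃ → x₁ ≠ x₃ →
        Real.sign (det3 (F x₁) (F x₂) (F x₃)) = ε * Real.sign (det3 x₁ x₂ x₃) := by
    rcases hsign with h | h
    · exact ⟨1, Or.inl rfl, fun x₁ h₁ x₂ h₂ x₃ h₃ n₁ n₂ n₃ => by
        rw [← osign_eq, ← osign_eq, h x₁ h₁ x₂ h₂ x₃ h₃ n₁ n₂ n₃, one_mul]⟩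
    · exact ⟨-1, Or.inr rfl, fun x₁ h₁ x₂ h₂ x₃ h₃ n₁ n₂ n₃ => by
        rw [← osign_eq, ← osign_eq, h x₁ h₁ x₂ h₂ x₃ h₃ n₁ n₂ n₃, neg_one_mul]⟩
  intro S hS
  apply Set.Subset.antisymm
  · exact key hX hY hF hε hs hS
  · -- inverse direction
    set G := Function.invFunOn F X with hGdef
    have hInv : Set.InvOn G F X Y := hF.invOn_invFunOn
    have hG : Set.BijOn G Y X := Set.BijOn.symm hInv.symm hF
    have hsG : ∀ y₁ ∈ Y, ∀ y₂ ∈ Y, ∀ y₃ ∈ Y, y₁ ≠ y₂ → y₂ ≠ y₃ → y₁ ≠ y₃ →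
        Real.sign (det3 (G y₁) (G y₂) (G y₃)) = ε * Real.sign (det3 y₁ y₂ y₃) := by
      intro y₁ h₁ y₂ h₂ y₃ h₃ n₁ n₂ n₃
      have m₁ : G y₁ ∈ X := hG.mapsTo h₁
      have m₂ : G y₂ ∈ X := hG.mapsTo h₂
      have m₃ : G y₃ ∈ X := hG.mapsTo h₃
      have d₁ : G y₁ ≠ G y₂ := fun h => n₁ (hG.injOn h₁ h₂ h)
      have d₂ : G y₂ ≠ G y₃ := fun h => n₂ (hG.injOn h₂ h₃ h)
      have d₃ : G y₁ ≠ G y₃ := fun h => n₃ (hG.injOn h₁ h₃ h)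
      have := hs (G y₁) m₁ (G y₂) m₂ (G y₃) m₃ d₁ d₂ d₃
      rw [hInv.2 h₁, hInv.2 h₂, hInv.2 h₃] at this
      rcases hε with rfl | rfl <;> rw [this] <;> ring
    have hFS : F '' S ⊆ Y := fun y ⟨x, hx, hxy⟩ => hxy ▸ hF.mapsTo (hS hx)
    have hkey := key hY hX hG hε hsG hFS
    have hGFS : G '' (F '' S) = S := by
      rw [Set.image_image]
      have : ∀ x ∈ S, G (F x) = x := fun x hx => hInv.1 (hS hx)
      rw [Set.image_congr this]; exact Set.image_id S
    rw [hGFS] at hkey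
    rintro q ⟨hqc, hqY⟩
    have hGq : G q ∈ convexHull ℝ S ∩ X := hkey ⟨q, ⟨hqc, hqY⟩, rfl⟩
    exact ⟨G q, hGq, hInv.2 hqY⟩
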